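/- Fix integers r ≥ 2, n ≥ 1, N ≥ rn+1 and an r-coloring of the edges of the complete bipartite graph K_{N,N} with parts X and Y that contains no monochromatic copy of S_{n,n}. For i ∈ {1,...,r} let z_i be the number of vertices of X ∪ Y that receive exactly i colors, and let e* be the number of important edges. Then ∑_{i=1}^{r} z_i · (N - (r-i)n) ≤ e*. -/

import Mathlib

/-- A monochromatic copy of the double star `S_{k,l}` in an `r`-coloring `c` of the
edges of the complete bipartite graph `K_{N,N}` with parts `X = Fin N` (first argument
of `c`) and `Y = Fin N` (second argument). -/
def BipHasMonoDoubleStar (N r k l : ℕ) (c : Fin N → Fin N → Fin r) : Prop :=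
  ∃ (u v : Fin N) (a : Fin k → Fin N) (b : Fin l → Fin N) (col : Fin r),
    Function.Injective a ∧ Function.Injective b ∧
    (∀ i, a i ≠ v) ∧ (∀ j, b j ≠ u) ∧
    c u v = col ∧ (∀ i, c u (a i) = col) ∧ (∀ j, c (b j) v = col)

/-- The number of edges of color `i` incident to the vertex `x ∈ X`. -/
def dX (N r : ℕ) (c : Fin N → Fin N → Fin r) (i : Fin r) (x : Fin N) : ℕ :=
  (Finset.univ.filter (fun y => c x y = i)).card

/-- The number of edges of color `i` incident to the vertex `y ∈ Y`. -/
def dY (N r : ℕ) (c : Fin N → Fin N → Fin r) (i : Fin r) (y : Fin N) : ℕ :=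
  (Finset.univ.filter (fun x => c x y = i)).card

/-- `x_i`: the number of vertices of `X` whose unique received color is `i`
(a vertex receives color `j` if it is incident to at least `n+1` edges of color `j`). -/
def xcount (n N r : ℕ) (c : Fin N → Fin N → Fin r) (i : Fin r) : ℕ :=
  (Finset.univ.filter (fun x : Fin N =>
    n + 1 ≤ dX N r c i x ∧ ∀ j : Fin r, n + 1 ≤ dX N r c j x → j = i)).card

/-- `y_i`: the number of vertices of `Y` whose unique received color is `i`. -/
def ycount (n N r : ℕ) (c : Fin N → Fin N → Fin r) (i : Fin r) : ℕ :=
  (Finset.univ.filter (fun y : Fin N =>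
    n + 1 ≤ dY N r c i y ∧ ∀ j : Fin r, n + 1 ≤ dY N r c j y → j = i)).card

/-- `z_i`: the number of vertices of `X ∪ Y` receiving exactly `i` colors. -/
def zcount (n N r : ℕ) (c : Fin N → Fin N → Fin r) (i : ℕ) : ℕ :=
  (Finset.univ.filter (fun x : Fin N =>
    (Finset.univ.filter (fun j : Fin r => n + 1 ≤ dX N r c j x)).card = i)).card +
  (Finset.univ.filter (fun y : Fin N =>
    (Finset.univ.filter (fun j : Fin r => n + 1 ≤ dY N r c j y)).card = i)).card

/-- `e*`: the number of important edges, i.e. edges whose color is received by at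
least one of its endpoints. -/
def estar (n N r : ℕ) (c : Fin N → Fin N → Fin r) : ℕ :=
  (Finset.univ.filter (fun p : Fin N × Fin N =>
    n + 1 ≤ dX N r c (c p.1 p.2) p.1 ∨ n + 1 ≤ dY N r c (c p.1 p.2) p.2)).card

lemma key_no_double (r n N : ℕ) (c : Fin N → Fin N → Fin r)
    (hno : ¬ BipHasMonoDoubleStar N r n n c) (x y : Fin N) :
    ¬ (n + 1 ≤ dX N r c (c x y) x ∧ n + 1 ≤ dY N r c (c x y) y) := by
  rintro ⟨hx, hy⟩
  apply hno
  have hA : n ≤ ((Finset.univ.filter (fun y' => c x y' = c x y)).erase y).card := by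
    have h1 := Finset.pred_card_le_card_erase
      (s := Finset.univ.filter (fun y' => c x y' = c x y)) (a := y)
    have h2 : n + 1 ≤ (Finset.univ.filter (fun y' => c x y' = c x y)).card := hx
    omega
  have hB : n ≤ ((Finset.univ.filter (fun x' => c x' y = c x y)).erase x).card := by
    have h1 := Finset.pred_card_le_card_erase
      (s := Finset.univ.filter (fun x' => c x' y = c x y)) (a := x)
    have h2 : n + 1 ≤ (Finset.univ.filter (fun x' => c x' y = c x y)).card := hy
    omega
  refine ⟨x, y, fun i => Finset.orderEmbOfCardLe _ hA i,
    fun j => Finset.orderEmbOfCardLe _ hB j, c x y,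
    fun i j h => (Finset.orderEmbOfCardLe _ hA).injective h,
    fun i j h => (Finset.orderEmbOfCardLe _ hB).injective h, ?_, ?_, rfl, ?_, ?_⟩
  · exact fun i => Finset.ne_of_mem_erase (Finset.orderEmbOfCardLe_mem _ hA i)
  · exact fun j => Finset.ne_of_mem_erase (Finset.orderEmbOfCardLe_mem _ hB j)
  · intro i
    have := Finset.mem_of_mem_erase (Finset.orderEmbOfCardLe_mem _ hA i)
    exact (Finset.mem_filter.mp this).2
  · intro j
    have := Finset.mem_of_mem_erase (Finset.orderEmbOfCardLe_mem _ hB j)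
    exact (Finset.mem_filter.mp this).2

lemma per_vertex (r n N : ℕ) (c : Fin N → Fin N → Fin r) (x : Fin N) :
    N - (r - (Finset.univ.filter (fun j : Fin r => n + 1 ≤ dX N r c j x)).card) * n
      ≤ (Finset.univ.filter (fun y : Fin N => n + 1 ≤ dX N r c (c x y) x)).card := by
  set T := Finset.univ.filter (fun j : Fin r => n + 1 ≤ dX N r c j x) with hT
  set G := Finset.univ.filter (fun y : Fin N => n + 1 ≤ dX N r c (c x y) x) with hG
  set C := Finset.univ.filter (fun y : Fin N => ¬ (n + 1 ≤ dX N r c (c x y) x)) with hC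
  have hsplit : G.card + C.card = N := by
    rw [hG, hC, Finset.card_filter_add_card_filter_not]
    simp
  have hsub : C ⊆ (Finset.univ \ T).biUnion
      (fun j => Finset.univ.filter (fun y => c x y = j)) := by
    intro y hy
    rw [hC, Finset.mem_filter] at hy
    rw [Finset.mem_biUnion]
    refine ⟨c x y, ?_, ?_⟩
    · rw [Finset.mem_sdiff, hT, Finset.mem_filter]
      exact ⟨Finset.mem_univ _, fun h => hy.2 h.2⟩
    · simp
  have hCcard : C.card ≤ (r - T.card) * n := by
    calc C.card ≤ ((Finset.univ \ T).biUnion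
          (fun j => Finset.univ.filter (fun y => c x y = j))).card := Finset.card_le_card hsub
      _ ≤ ∑ j ∈ Finset.univ \ T, (Finset.univ.filter (fun y => c x y = j)).card :=
          Finset.card_biUnion_le
      _ ≤ ∑ _j ∈ Finset.univ \ T, n := by
          apply Finset.sum_le_sum
          intro j hj
          rw [Finset.mem_sdiff, hT, Finset.mem_filter] at hj
          have : ¬ (n + 1 ≤ dX N r c j x) := fun h => hj.2 ⟨Finset.mem_univ _, h⟩
          unfold dX at this
          omega
      _ = (r - T.card) * n := by
          rw [Finset.sum_const, smul_eq_mul, Finset.card_univ_diff]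
          simp
  omega

lemma received_card_mem (r n N : ℕ) (hN : r * n + 1 ≤ N) (c : Fin N → Fin N → Fin r)
    (x : Fin N) :
    (Finset.univ.filter (fun j : Fin r => n + 1 ≤ dX N r c j x)).card ∈ Finset.Icc 1 r := by
  rw [Finset.mem_Icc]
  constructor
  · rw [Nat.one_le_iff_ne_zero, Ne, Finset.card_eq_zero, Finset.filter_eq_empty_iff]
    intro hall
    have hsum : (Finset.univ : Finset (Fin N)).card
        = ∑ j : Fin r, (Finset.univ.filter (fun y => c x y = j)).card :=
      Finset.card_eq_sum_card_fiberwise (fun y _ => Finset.mem_univ (c x y))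
    have hle : ∑ j : Fin r, (Finset.univ.filter (fun y => c x y = j)).card ≤ r * n := by
      calc ∑ j : Fin r, (Finset.univ.filter (fun y => c x y = j)).card
          ≤ ∑ _j : Fin r, n := by
            apply Finset.sum_le_sum
            intro j _
            have := hall (Finset.mem_univ j)
            unfold dX at this
            omega
        _ = r * n := by simp [Finset.sum_const, mul_comm]
    rw [Finset.card_univ, Fintype.card_fin] at hsum
    omega
  · exact le_trans (Finset.card_filter_le _ _) (by simp)

lemma group_sum (r n N : ℕ) (hN : r * n + 1 ≤ N) (c : Fin N → Fin N → Fin r) :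
    ∑ i ∈ Finset.Icc 1 r,
      (Finset.univ.filter (fun x : Fin N =>
        (Finset.univ.filter (fun j : Fin r => n + 1 ≤ dX N r c j x)).card = i)).card
        * (N - (r - i) * n)
      ≤ (Finset.univ.filter
          (fun p : Fin N × Fin N => n + 1 ≤ dX N r c (c p.1 p.2) p.1)).card := by
  have hcard : (Finset.univ.filter
      (fun p : Fin N × Fin N => n + 1 ≤ dX N r c (c p.1 p.2) p.1)).card
      = ∑ x : Fin N,
          (Finset.univ.filter (fun y : Fin N => n + 1 ≤ dX N r c (c x y) x)).card := by
    rw [Finset.card_filter, Fintype.sum_prod_type]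
    exact Finset.sum_congr rfl (fun x _ => (Finset.card_filter _ _).symm)
  rw [hcard]
  have hfib := Finset.sum_fiberwise_of_maps_to (s := (Finset.univ : Finset (Fin N)))
    (t := Finset.Icc 1 r)
    (g := fun x => (Finset.univ.filter (fun j : Fin r => n + 1 ≤ dX N r c j x)).card)
    (fun x _ => received_card_mem r n N hN c x)
    (fun x : Fin N =>
      N - (r - (Finset.univ.filter (fun j : Fin r => n + 1 ≤ dX N r c j x)).card) * n)
  calc ∑ i ∈ Finset.Icc 1 r,
      (Finset.univ.filter (fun x : Fin N =>
        (Finset.univ.filter (fun j : Fin r => n + 1 ≤ dX N r c j x)).card = i)).card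
        * (N - (r - i) * n)
      = ∑ i ∈ Finset.Icc 1 r, ∑ x ∈ Finset.univ.filter (fun x : Fin N =>
          (Finset.univ.filter (fun j : Fin r => n + 1 ≤ dX N r c j x)).card = i),
          (N - (r - (Finset.univ.filter (fun j : Fin r => n + 1 ≤ dX N r c j x)).card) * n) := by
        refine Finset.sum_congr rfl (fun i _ => ?_)
        have hcg : ∀ x ∈ Finset.univ.filter (fun x : Fin N =>
            (Finset.univ.filter (fun j : Fin r => n + 1 ≤ dX N r c j x)).card = i),
            (N - (r - (Finset.univ.filter (fun j : Fin r => n + 1 ≤ dX N r c j x)).card) * n)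
              = (N - (r - i) * n) := by
          intro x hx
          rw [(Finset.mem_filter.mp hx).2]
        rw [Finset.sum_congr rfl hcg, Finset.sum_const, smul_eq_mul]
    _ = ∑ x : Fin N,
          (N - (r - (Finset.univ.filter (fun j : Fin r => n + 1 ≤ dX N r c j x)).card) * n) :=
        hfib
    _ ≤ _ := Finset.sum_le_sum (fun x _ => per_vertex r n N c x)


/-- Lower bound on the number of important edges:
`∑_{i=1}^{r} z_i (N - (r-i)n) ≤ e*`. -/
theorem stmt13 (r n N : ℕ) (hr : 2 ≤ r) (hn : 1 ≤ n) (hN : r * n + 1 ≤ N)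
    (c : Fin N → Fin N → Fin r) (hno : ¬ BipHasMonoDoubleStar N r n n c) :
    ∑ i ∈ Finset.Icc 1 r, zcount n N r c i * (N - (r - i) * n) ≤ estar n N r c := by
  set c' : Fin N → Fin N → Fin r := fun a b => c b a with hc'
  have hzc : ∀ i : ℕ, zcount n N r c i
      = (Finset.univ.filter (fun x : Fin N =>
          (Finset.univ.filter (fun j : Fin r => n + 1 ≤ dX N r c j x)).card = i)).card
        + (Finset.univ.filter (fun y : Fin N =>
          (Finset.univ.filter (fun j : Fin r => n + 1 ≤ dX N r c' j y)).card = i)).card :=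
    fun i => rfl
  -- split estar
  have hdisj : Disjoint
      (Finset.univ.filter (fun p : Fin N × Fin N => n + 1 ≤ dX N r c (c p.1 p.2) p.1))
      (Finset.univ.filter (fun p : Fin N × Fin N => n + 1 ≤ dY N r c (c p.1 p.2) p.2)) := by
    rw [Finset.disjoint_left]
    intro p hp hq
    exact key_no_double r n N c hno p.1 p.2
      ⟨(Finset.mem_filter.mp hp).2, (Finset.mem_filter.mp hq).2⟩
  have hestar : estar n N r c
      = (Finset.univ.filter (fun p : Fin N × Fin N => n + 1 ≤ dX N r c (c p.1 p.2) p.1)).card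
      + (Finset.univ.filter (fun p : Fin N × Fin N => n + 1 ≤ dY N r c (c p.1 p.2) p.2)).card := by
    unfold estar
    rw [Finset.filter_or, Finset.card_union_of_disjoint hdisj]
  have hswap : (Finset.univ.filter
        (fun p : Fin N × Fin N => n + 1 ≤ dY N r c (c p.1 p.2) p.2)).card
      = (Finset.univ.filter
        (fun q : Fin N × Fin N => n + 1 ≤ dX N r c' (c' q.1 q.2) q.1)).card := by
    apply Finset.card_nbij' (fun p => (p.2, p.1)) (fun q => (q.2, q.1))
    · intro p hp
      rw [Finset.mem_coe, Finset.mem_filter] at hp ⊢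
      exact ⟨Finset.mem_univ _, hp.2⟩
    · intro q hq
      rw [Finset.mem_coe, Finset.mem_filter] at hq ⊢
      exact ⟨Finset.mem_univ _, hq.2⟩
    · intro p _; rfl
    · intro q _; rfl
  calc ∑ i ∈ Finset.Icc 1 r, zcount n N r c i * (N - (r - i) * n)
      = ∑ i ∈ Finset.Icc 1 r,
          ((Finset.univ.filter (fun x : Fin N =>
            (Finset.univ.filter (fun j : Fin r => n + 1 ≤ dX N r c j x)).card = i)).card
              * (N - (r - i) * n)
          + (Finset.univ.filter (fun y : Fin N =>
            (Finset.univ.filter (fun j : Fin r => n + 1 ≤ dX N r c' j y)).card = i)).card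
              * (N - (r - i) * n)) := by
        refine Finset.sum_congr rfl (fun i _ => ?_)
        rw [hzc i, add_mul]
    _ = (∑ i ∈ Finset.Icc 1 r,
          (Finset.univ.filter (fun x : Fin N =>
            (Finset.univ.filter (fun j : Fin r => n + 1 ≤ dX N r c j x)).card = i)).card
              * (N - (r - i) * n))
        + ∑ i ∈ Finset.Icc 1 r,
          (Finset.univ.filter (fun y : Fin N =>
            (Finset.univ.filter (fun j : Fin r => n + 1 ≤ dX N r c' j y)).card = i)).card
              * (N - (r - i) * n) := Finset.sum_add_distrib
    _ ≤ (Finset.univ.filter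
          (fun p : Fin N × Fin N => n + 1 ≤ dX N r c (c p.1 p.2) p.1)).card
        + (Finset.univ.filter
          (fun q : Fin N × Fin N => n + 1 ≤ dX N r c' (c' q.1 q.2) q.1)).card :=
        Nat.add_le_add (group_sum r n N hN c) (group_sum r n N hN c')
    _ = estar n N r c := by rw [hestar, hswap]
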